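/- Let k be a field and q ∈ k^×. The cosets modulo I_1 of the monomials X_{i_1 j_1} X_{i_2 j_2} ⋯ X_{i_l j_l} with i_1 ≥ i_2 ≥ ⋯ ≥ i_l and j_1 ≤ j_2 ≤ ⋯ ≤ j_l (including the empty monomial 1) form a k-vector-space basis of O_q(M_{m,n}(k))/I_1. -/

import Mathlib

open scoped TensorProduct

noncomputable section

/-- Defining relations of the coordinate ring `O_q(k^n)` of quantum affine `n`-space:
`y_i y_j = q y_j y_i` for `i < j`. -/
inductive AffRel (k : Type) [Field k] (q : k) (n : ℕ) :
    FreeAlgebra k (Fin n) → FreeAlgebra k (Fin n) → Prop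
  | rel : ∀ {i j : Fin n}, i < j →
      AffRel k q n (FreeAlgebra.ι k i * FreeAlgebra.ι k j)
        (q • (FreeAlgebra.ι k j * FreeAlgebra.ι k i))

/-- The coordinate ring `O_q(k^n)` of quantum affine `n`-space. -/
abbrev QAff (k : Type) [Field k] (q : k) (n : ℕ) : Type := RingQuot (AffRel k q n)

/-- The canonical generators `y_1, …, y_n` of `O_q(k^n)`. -/
def affGen (k : Type) [Field k] (q : k) (n : ℕ) (i : Fin n) : QAff k q n :=
  RingQuot.mkAlgHom k (AffRel k q n) (FreeAlgebra.ι k i)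

/-- Defining relations of the coordinate ring `O_q(M_{m,n}(k))` of quantum `m × n` matrices. -/
inductive MatRel (k : Type) [Field k] (q : k) (m n : ℕ) :
    FreeAlgebra k (Fin m × Fin n) → FreeAlgebra k (Fin m × Fin n) → Prop
  | col : ∀ {i l : Fin m} {j : Fin n}, i < l →
      MatRel k q m n (FreeAlgebra.ι k (i, j) * FreeAlgebra.ι k (l, j))
        (q • (FreeAlgebra.ι k (l, j) * FreeAlgebra.ι k (i, j)))
  | row : ∀ {i : Fin m} {j s : Fin n}, j < s →
      MatRel k q m n (FreeAlgebra.ι k (i, j) * FreeAlgebra.ι k (i, s))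
        (q • (FreeAlgebra.ι k (i, s) * FreeAlgebra.ι k (i, j)))
  | comm : ∀ {i l : Fin m} {j s : Fin n}, i < l → j < s →
      MatRel k q m n (FreeAlgebra.ι k (i, s) * FreeAlgebra.ι k (l, j))
        (FreeAlgebra.ι k (l, j) * FreeAlgebra.ι k (i, s))
  | mixed : ∀ {i l : Fin m} {j s : Fin n}, i < l → j < s →
      MatRel k q m n
        (FreeAlgebra.ι k (i, j) * FreeAlgebra.ι k (l, s) -
          FreeAlgebra.ι k (l, s) * FreeAlgebra.ι k (i, j))
        ((q - q⁻¹) • (FreeAlgebra.ι k (i, s) * FreeAlgebra.ι k (l, j)))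

/-- The coordinate ring `O_q(M_{m,n}(k))` of quantum `m × n` matrices. -/
abbrev QMat (k : Type) [Field k] (q : k) (m n : ℕ) : Type := RingQuot (MatRel k q m n)

/-- The canonical generators `X i j` of `O_q(M_{m,n}(k))`. -/
def X (k : Type) [Field k] (q : k) (m n : ℕ) (i : Fin m) (j : Fin n) : QMat k q m n :=
  RingQuot.mkAlgHom k (MatRel k q m n) (FreeAlgebra.ι k (i, j))

/-- The two-sided ideal `I₁` of `O_q(M_{m,n}(k))` generated by the `2 × 2` quantum minors
`X_{ij} X_{ls} - q X_{is} X_{lj}` for `i < l`, `j < s`. -/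
def I₁ (k : Type) [Field k] (q : k) (m n : ℕ) : TwoSidedIdeal (QMat k q m n) :=
  TwoSidedIdeal.span
    { a | ∃ (i l : Fin m) (j s : Fin n), i < l ∧ j < s ∧
        a = X k q m n i j * X k q m n l s - q • (X k q m n i s * X k q m n l j) }

/-- The monomial `X_{i₁j₁} X_{i₂j₂} ⋯ X_{iₗjₗ}` associated to a list of index pairs. -/
def matMono (k : Type) [Field k] (q : k) (m n : ℕ) (L : List (Fin m × Fin n)) :
    QMat k q m n :=
  (L.map fun p => X k q m n p.1 p.2).prod

/-- A list of index pairs is *ordered* if the row indices are non-increasing and the column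
indices are non-decreasing, i.e. `i₁ ≥ i₂ ≥ ⋯ ≥ iₗ` and `j₁ ≤ j₂ ≤ ⋯ ≤ jₗ`. -/
def OrderedIdx {m n : ℕ} (L : List (Fin m × Fin n)) : Prop :=
  L.Chain' fun p p' => p'.1 ≤ p.1 ∧ p.2 ≤ p'.2


namespace QMAux

variable (k : Type) [Field k] (q : k) (m n : ℕ)

/-- The exponent monoid: a pair (row multiplicities, column multiplicities). -/
abbrev Mon := (Fin m →₀ ℕ) × (Fin n →₀ ℕ)

/-- The representation space. -/
abbrev Vv := Mon m n →₀ k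

/-- Generator exponent. -/
def δ (p : Fin m × Fin n) : Mon m n := (Finsupp.single p.1 1, Finsupp.single p.2 1)

def rowE (i : Fin m) (α : Fin m →₀ ℕ) : ℕ := ∑ l, if i < l then α l else 0

def colE (j : Fin n) (β : Fin n →₀ ℕ) : ℕ := ∑ s, if j < s then β s else 0

def cE (p : Fin m × Fin n) (μ : Mon m n) : ℕ := rowE m p.1 μ.1 + colE n p.2 μ.2

lemma cE_add (p : Fin m × Fin n) (μ ν : Mon m n) :
    cE m n p (μ + ν) = cE m n p μ + cE m n p ν := by
  simp [cE, rowE, colE, Finsupp.add_apply, Prod.fst_add, Prod.snd_add, ite_add_zero,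
    Finset.sum_add_distrib]
  ring

lemma rowE_single (i l : Fin m) : rowE m i (Finsupp.single l 1) = if i < l then 1 else 0 := by
  rw [rowE, Finset.sum_eq_single l]
  · simp
  · intro b _ hb
    simp [Finsupp.single_apply, Ne.symm hb]
  · simp

lemma colE_single (j s : Fin n) : colE n j (Finsupp.single s 1) = if j < s then 1 else 0 := by
  rw [colE, Finset.sum_eq_single s]
  · simp
  · intro b _ hb
    simp [Finsupp.single_apply, Ne.symm hb]
  · simp

lemma cE_δ (p p' : Fin m × Fin n) :
    cE m n p (δ m n p') = (if p.1 < p'.1 then 1 else 0) + (if p.2 < p'.2 then 1 else 0) := by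
  simp [cE, δ, rowE_single, colE_single]

/-- The shift-and-scale operator attached to a generator. -/
def Tog (p : Fin m × Fin n) : Vv k m n →ₗ[k] Vv k m n :=
  Finsupp.lsum ℕ fun μ => (q ^ cE m n p μ) • Finsupp.lsingle (δ m n p + μ)

lemma Tog_single (p : Fin m × Fin n) (μ : Mon m n) (x : k) :
    Tog k q m n p (Finsupp.single μ x) = q ^ cE m n p μ • Finsupp.single (δ m n p + μ) x := by
  simp [Tog]

lemma TT_single (p p' : Fin m × Fin n) (μ : Mon m n) (x : k) :
    (Tog k q m n p * Tog k q m n p') (Finsupp.single μ x)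
      = q ^ (cE m n p (δ m n p') + (cE m n p μ + cE m n p' μ))
          • Finsupp.single (δ m n p + δ m n p' + μ) x := by
  rw [Module.End.mul_apply, Tog_single, map_smul, Tog_single, smul_smul, ← pow_add, cE_add,
    add_assoc]
  ring_nf

end QMAux
namespace QMAux

variable (k : Type) [Field k] (q : k) (m n : ℕ)

def Phi : FreeAlgebra k (Fin m × Fin n) →ₐ[k] Module.End k (Vv k m n) :=
  FreeAlgebra.lift k fun p => Tog k q m n p

lemma Phi_ι (p : Fin m × Fin n) :
    Phi k q m n (FreeAlgebra.ι k p) = Tog k q m n p :=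
  FreeAlgebra.lift_ι_apply _ _

lemma delta_mix (i l : Fin m) (j s : Fin n) :
    δ m n (i, j) + δ m n (l, s) = δ m n (i, s) + δ m n (l, j) := by
  simp [δ, Prod.ext_iff, add_comm]

lemma Phi_rel (hq : q ≠ 0) : ∀ ⦃a b⦄, MatRel k q m n a b → Phi k q m n a = Phi k q m n b := by
  intro a b h
  induction h with
  | @col i l j hil =>
    simp only [map_mul, map_smul, Phi_ι]
    apply Finsupp.lhom_ext
    intro μ x
    rw [LinearMap.smul_apply, TT_single, TT_single, cE_δ, cE_δ, smul_smul,
      show δ m n (l, j) + δ m n (i, j) = δ m n (i, j) + δ m n (l, j) from add_comm _ _,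
      if_pos hil, if_neg (lt_irrefl j), if_neg (not_lt.2 hil.le)]
    congr 1
    ring
  | @row i j s hjs =>
    simp only [map_mul, map_smul, Phi_ι]
    apply Finsupp.lhom_ext
    intro μ x
    rw [LinearMap.smul_apply, TT_single, TT_single, cE_δ, cE_δ, smul_smul,
      show δ m n (i, s) + δ m n (i, j) = δ m n (i, j) + δ m n (i, s) from add_comm _ _,
      if_pos hjs, if_neg (lt_irrefl i), if_neg (not_lt.2 hjs.le)]
    congr 1
    ring
  | @comm i l j s hil hjs =>
    simp only [map_mul, Phi_ι]
    apply Finsupp.lhom_ext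
    intro μ x
    rw [TT_single, TT_single, cE_δ, cE_δ,
      show δ m n (l, j) + δ m n (i, s) = δ m n (i, s) + δ m n (l, j) from add_comm _ _,
      if_pos hil, if_neg (not_lt.2 hjs.le), if_neg (not_lt.2 hil.le), if_pos hjs]
    congr 1
    ring
  | @mixed i l j s hil hjs =>
    simp only [map_mul, map_sub, map_smul, Phi_ι]
    apply Finsupp.lhom_ext
    intro μ x
    rw [LinearMap.sub_apply, LinearMap.smul_apply, TT_single, TT_single, TT_single,
      cE_δ, cE_δ, cE_δ,
      show δ m n (l, s) + δ m n (i, j) = δ m n (i, j) + δ m n (l, s) from add_comm _ _,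
      delta_mix m n, smul_smul, ← sub_smul,
      if_pos hil, if_pos hjs, if_neg (not_lt.2 hil.le), if_neg (not_lt.2 hjs.le)]
    congr 1
    simp only [cE]
    field_simp
    ring

end QMAux
namespace QMAux

variable (k : Type) [Field k] (q : k) (m n : ℕ)

def Phi1 (hq : q ≠ 0) : QMat k q m n →ₐ[k] Module.End k (Vv k m n) :=
  RingQuot.liftAlgHom k ⟨Phi k q m n, Phi_rel k q m n hq⟩

lemma Phi1_X (hq : q ≠ 0) (i : Fin m) (j : Fin n) :
    Phi1 k q m n hq (X k q m n i j) = Tog k q m n (i, j) := by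
  rw [X, Phi1, RingQuot.liftAlgHom_mkAlgHom_apply, Phi_ι]

lemma Phi1_I₁ (hq : q ≠ 0) : ∀ a ∈ I₁ k q m n, Phi1 k q m n hq a = 0 := by
  intro a ha
  rw [I₁, TwoSidedIdeal.mem_span_iff] at ha
  refine (TwoSidedIdeal.mem_ker _).1 (ha (TwoSidedIdeal.ker (Phi1 k q m n hq)) ?_)
  rintro z ⟨i, l, j, s, hil, hjs, rfl⟩
  rw [SetLike.mem_coe, TwoSidedIdeal.mem_ker, map_sub, map_mul, map_smul, map_mul,
    Phi1_X, Phi1_X, Phi1_X, Phi1_X]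
  apply Finsupp.lhom_ext
  intro μ x
  rw [LinearMap.sub_apply, LinearMap.smul_apply, TT_single, TT_single,
    cE_δ, cE_δ, delta_mix m n, smul_smul, ← sub_smul, LinearMap.zero_apply,
    if_pos hil, if_pos hjs, if_neg (not_lt.2 hjs.le)]
  convert zero_smul k _
  simp only [cE]
  ring

def PhiQ (hq : q ≠ 0) : (I₁ k q m n).ringCon.Quotient → Module.End k (Vv k m n) :=
  fun z => Quotient.liftOn' z (Phi1 k q m n hq) fun a b h => by
    have hab : a - b ∈ I₁ k q m n := ((I₁ k q m n).rel_iff a b).1 h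
    have := Phi1_I₁ k q m n hq _ hab
    rw [map_sub, sub_eq_zero] at this
    exact this

lemma PhiQ_coe (hq : q ≠ 0) (a : QMat k q m n) :
    PhiQ k q m n hq (a : (I₁ k q m n).ringCon.Quotient) = Phi1 k q m n hq a := rfl

def ell (hq : q ≠ 0) : (I₁ k q m n).ringCon.Quotient →ₗ[k] Vv k m n where
  toFun z := PhiQ k q m n hq z (Finsupp.single 0 1)
  map_add' x y := Quotient.inductionOn₂' x y fun a b => by
    show PhiQ k q m n hq (((a : QMat k q m n) : (I₁ k q m n).ringCon.Quotient)
        + ((b : QMat k q m n) : (I₁ k q m n).ringCon.Quotient)) (Finsupp.single 0 1)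
      = PhiQ k q m n hq ((a : QMat k q m n) : (I₁ k q m n).ringCon.Quotient) (Finsupp.single 0 1)
        + PhiQ k q m n hq ((b : QMat k q m n) : (I₁ k q m n).ringCon.Quotient) (Finsupp.single 0 1)
    rw [← RingCon.coe_add, PhiQ_coe, PhiQ_coe, PhiQ_coe, map_add, LinearMap.add_apply]
  map_smul' c x := Quotient.inductionOn' x fun a => by
    show PhiQ k q m n hq (c • ((a : QMat k q m n) : (I₁ k q m n).ringCon.Quotient))
        (Finsupp.single 0 1)
      = c • PhiQ k q m n hq ((a : QMat k q m n) : (I₁ k q m n).ringCon.Quotient)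
        (Finsupp.single 0 1)
    rw [← RingCon.coe_smul, PhiQ_coe, PhiQ_coe, map_smul, LinearMap.smul_apply]

end QMAux
namespace QMAux

variable (k : Type) [Field k] (q : k) (m n : ℕ)

def σL (L : List (Fin m × Fin n)) : Mon m n := (L.map (δ m n)).sum

lemma Phi1_matMono (hq : q ≠ 0) :
    ∀ (L : List (Fin m × Fin n)) (ν : Mon m n) (x : k), ∃ e : ℕ,
      Phi1 k q m n hq (matMono k q m n L) (Finsupp.single ν x)
        = q ^ e • Finsupp.single (σL m n L + ν) x := by
  intro L
  induction L with
  | nil =>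
    intro ν x
    refine ⟨0, ?_⟩
    simp [matMono, σL]
  | cons p L ih =>
    intro ν x
    obtain ⟨e, he⟩ := ih ν x
    refine ⟨e + cE m n p (σL m n L + ν), ?_⟩
    have h1 : matMono k q m n (p :: L) = X k q m n p.1 p.2 * matMono k q m n L := by
      simp [matMono]
    rw [h1, map_mul, Module.End.mul_apply, he, map_smul, Phi1_X, Tog_single, smul_smul,
      ← pow_add]
    congr 1
    simp only [σL, List.map_cons, List.sum_cons]
    rw [add_assoc]

lemma ell_matMono (hq : q ≠ 0) (L : List (Fin m × Fin n)) : ∃ e : ℕ,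
    ell k q m n hq ((matMono k q m n L : QMat k q m n) : (I₁ k q m n).ringCon.Quotient)
      = q ^ e • Finsupp.single (σL m n L) (1 : k) := by
  obtain ⟨e, he⟩ := Phi1_matMono k q m n hq L 0 1
  refine ⟨e, ?_⟩
  show PhiQ k q m n hq _ _ = _
  rw [PhiQ_coe, he, add_zero]

lemma σL_fst (L : List (Fin m × Fin n)) :
    (σL m n L).1 = Multiset.toFinsupp (L.map Prod.fst : Multiset (Fin m)) := by
  induction L with
  | nil => simp [σL]
  | cons p L ih =>
    rw [σL, List.map_cons, List.sum_cons, Prod.fst_add]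
    rw [List.map_cons, ← Multiset.cons_coe]
    rw [← Multiset.singleton_add, map_add, Multiset.toFinsupp_singleton]
    rw [← ih]
    rfl

lemma σL_snd (L : List (Fin m × Fin n)) :
    (σL m n L).2 = Multiset.toFinsupp (L.map Prod.snd : Multiset (Fin n)) := by
  induction L with
  | nil => simp [σL]
  | cons p L ih =>
    rw [σL, List.map_cons, List.sum_cons, Prod.snd_add]
    rw [List.map_cons, ← Multiset.cons_coe]
    rw [← Multiset.singleton_add, map_add, Multiset.toFinsupp_singleton]
    rw [← ih]
    rfl

lemma eq_of_maps {α β : Type*} :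
    ∀ (L L' : List (α × β)), L.map Prod.fst = L'.map Prod.fst →
      L.map Prod.snd = L'.map Prod.snd → L = L' := by
  intro L
  induction L with
  | nil => intro L' h1 _; cases L' <;> simp_all
  | cons p L ih =>
    intro L' h1 h2
    cases L' with
    | nil => simp_all
    | cons p' L' =>
      simp only [List.map_cons, List.cons.injEq] at h1 h2
      rw [ih L' h1.2 h2.2, Prod.ext_iff.2 ⟨h1.1, h2.1⟩]

lemma σL_inj : ∀ (L L' : List (Fin m × Fin n)), OrderedIdx L → OrderedIdx L' →
    σL m n L = σL m n L' → L = L' := by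
  have htrans : IsTrans (Fin m × Fin n) (fun p p' => p'.1 ≤ p.1 ∧ p.2 ≤ p'.2) :=
    ⟨fun _ _ _ h1 h2 => ⟨h2.1.trans h1.1, h1.2.trans h2.2⟩⟩
  intro L L' hL hL' hσ
  have hfst : (L.map Prod.fst : Multiset (Fin m)) = (L'.map Prod.fst : Multiset (Fin m)) := by
    apply Multiset.toFinsupp.injective
    rw [← σL_fst, ← σL_fst, hσ]
  have hsnd : (L.map Prod.snd : Multiset (Fin n)) = (L'.map Prod.snd : Multiset (Fin n)) := by
    apply Multiset.toFinsupp.injective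
    rw [← σL_snd, ← σL_snd, hσ]
  have hanti1 : IsAntisymm (Fin m) (fun a b => b ≤ a) := ⟨fun _ _ h1 h2 => le_antisymm h2 h1⟩
  have hanti2 : IsAntisymm (Fin n) (fun a b => a ≤ b) := ⟨fun _ _ h1 h2 => le_antisymm h1 h2⟩
  have sorted1 : ∀ (M : List (Fin m × Fin n)), OrderedIdx M →
      (M.map Prod.fst).Pairwise (fun a b => b ≤ a) := fun M hM =>
    List.Pairwise.map _ (fun _ _ h => h.1) (List.isChain_iff_pairwise.1 hM)
  have sorted2 : ∀ (M : List (Fin m × Fin n)), OrderedIdx M →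
      (M.map Prod.snd).Pairwise (fun a b => a ≤ b) := fun M hM =>
    List.Pairwise.map _ (fun _ _ h => h.2) (List.isChain_iff_pairwise.1 hM)
  refine eq_of_maps L L' ?_ ?_
  · exact List.Perm.eq_of_pairwise (fun _ _ _ _ h1 h2 => le_antisymm h2 h1) (sorted1 L hL) (sorted1 L' hL') (Multiset.coe_eq_coe.1 hfst)
  · exact List.Perm.eq_of_pairwise (fun _ _ _ _ h1 h2 => le_antisymm h1 h2) (sorted2 L hL) (sorted2 L' hL') (Multiset.coe_eq_coe.1 hsnd)

end QMAux
namespace QMAux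

variable (k : Type) [Field k] (q : k) (m n : ℕ)

lemma li_part (hq : q ≠ 0) :
    LinearIndependent k
      (fun L : { L : List (Fin m × Fin n) // OrderedIdx L } =>
        ((matMono k q m n L.1 : QMat k q m n) : (I₁ k q m n).ringCon.Quotient)) := by
  apply LinearIndependent.of_comp (ell k q m n hq)
  have hinj : Function.Injective
      (fun L : { L : List (Fin m × Fin n) // OrderedIdx L } => σL m n L.1) := by
    intro L L' h
    exact Subtype.ext (σL_inj m n L.1 L'.1 L.2 L'.2 h)
  have base := (Finsupp.basisSingleOne (R := k) (ι := Mon m n)).linearIndependent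
  have hli := (base.comp _ hinj).units_smul
    (fun L => Units.mk0 (q ^ Classical.choose (ell_matMono k q m n hq L.1))
      (pow_ne_zero _ hq))
  convert hli using 1
  funext L
  have := Classical.choose_spec (ell_matMono k q m n hq L.1)
  simp only [Function.comp_apply, Pi.smul_apply', Units.smul_def, Units.smul_mk0]
  refine this.trans ?_
  simp [Units.smul_def]

end QMAux
namespace QMAux

variable (k : Type) [Field k] (q : k) (m n : ℕ)

/-- Image of a generator in the quotient. -/
def xq (p : Fin m × Fin n) : (I₁ k q m n).ringCon.Quotient :=
  ((X k q m n p.1 p.2 : QMat k q m n) : (I₁ k q m n).ringCon.Quotient)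

/-- relations from `MatRel`, transported to `QMat`. -/
lemma qmat_rel {a b : FreeAlgebra k (Fin m × Fin n)} (h : MatRel k q m n a b) :
    RingQuot.mkAlgHom k (MatRel k q m n) a = RingQuot.mkAlgHom k (MatRel k q m n) b :=
  RingQuot.mkAlgHom_rel k h

lemma coe_eq_zero_of_mem {a : QMat k q m n} (ha : a ∈ I₁ k q m n) :
    ((a : QMat k q m n) : (I₁ k q m n).ringCon.Quotient) = 0 := by
  have h0 : (I₁ k q m n).ringCon a 0 := by
    rw [TwoSidedIdeal.rel_iff]
    simpa using ha
  exact Quotient.sound' h0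

lemma coe_mul' (a b : QMat k q m n) :
    ((a * b : QMat k q m n) : (I₁ k q m n).ringCon.Quotient) = (a : (I₁ k q m n).ringCon.Quotient) * b :=
  RingCon.coe_mul _ _ _

lemma coe_smul' (c : k) (a : QMat k q m n) :
    ((c • a : QMat k q m n) : (I₁ k q m n).ringCon.Quotient)
      = c • (a : (I₁ k q m n).ringCon.Quotient) :=
  RingCon.coe_smul _ _ _

lemma coe_sub' (a b : QMat k q m n) :
    ((a - b : QMat k q m n) : (I₁ k q m n).ringCon.Quotient)
      = (a : (I₁ k q m n).ringCon.Quotient) - b :=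
  map_sub ((I₁ k q m n).ringCon.mk') a b

/-- The quantum-minor relation in the quotient. -/
lemma minor_rel {i l : Fin m} {j s : Fin n} (hil : i < l) (hjs : j < s) :
    xq k q m n (i, j) * xq k q m n (l, s) = q • (xq k q m n (i, s) * xq k q m n (l, j)) := by
  have hmem : X k q m n i j * X k q m n l s - q • (X k q m n i s * X k q m n l j)
      ∈ I₁ k q m n :=
    TwoSidedIdeal.subset_span ⟨i, l, j, s, hil, hjs, rfl⟩
  have h0 := coe_eq_zero_of_mem k q m n hmem
  rw [coe_sub', coe_mul', coe_smul', coe_mul', sub_eq_zero] at h0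
  exact h0

/-- Transport a `MatRel`-relation of products into the quotient. -/
lemma col_rel {i l : Fin m} {j : Fin n} (hil : i < l) :
    xq k q m n (i, j) * xq k q m n (l, j) = q • (xq k q m n (l, j) * xq k q m n (i, j)) := by
  have h := qmat_rel k q m n (MatRel.col (j := j) hil)
  rw [map_mul, map_smul, map_mul] at h
  have := congrArg (fun z : QMat k q m n => ((z : (I₁ k q m n).ringCon.Quotient))) h
  rw [coe_mul', coe_smul', coe_mul'] at this
  exact this

lemma row_rel {i : Fin m} {j s : Fin n} (hjs : j < s) :
    xq k q m n (i, j) * xq k q m n (i, s) = q • (xq k q m n (i, s) * xq k q m n (i, j)) := by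
  have h := qmat_rel k q m n (MatRel.row (i := i) hjs)
  rw [map_mul, map_smul, map_mul] at h
  have := congrArg (fun z : QMat k q m n => ((z : (I₁ k q m n).ringCon.Quotient))) h
  rw [coe_mul', coe_smul', coe_mul'] at this
  exact this

lemma comm_rel {i l : Fin m} {j s : Fin n} (hil : i < l) (hjs : j < s) :
    xq k q m n (i, s) * xq k q m n (l, j) = xq k q m n (l, j) * xq k q m n (i, s) := by
  have h := qmat_rel k q m n (MatRel.comm hil hjs)
  rw [map_mul, map_mul] at h
  have := congrArg (fun z : QMat k q m n => ((z : (I₁ k q m n).ringCon.Quotient))) h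
  rw [coe_mul', coe_mul'] at this
  exact this

lemma mixed_rel {i l : Fin m} {j s : Fin n} (hil : i < l) (hjs : j < s) :
    xq k q m n (i, j) * xq k q m n (l, s) - xq k q m n (l, s) * xq k q m n (i, j)
      = (q - q⁻¹) • (xq k q m n (i, s) * xq k q m n (l, j)) := by
  have h := qmat_rel k q m n (MatRel.mixed hil hjs)
  rw [map_sub, map_mul, map_mul, map_smul, map_mul] at h
  have := congrArg (fun z : QMat k q m n => ((z : (I₁ k q m n).ringCon.Quotient))) h
  rw [coe_sub', coe_mul', coe_mul', coe_smul', coe_mul'] at this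
  exact this

end QMAux
namespace QMAux

variable (k : Type) [Field k] (q : k) (m n : ℕ)

lemma swap_cases (hq : q ≠ 0) (p p' : Fin m × Fin n)
    (hbad : ¬(p'.1 ≤ p.1 ∧ p.2 ≤ p'.2)) :
    ((p.1 < p'.1 ∨ (p.1 = p'.1 ∧ p'.2 < p.2)) ∧ ∃ c : k,
        xq k q m n p * xq k q m n p' = c • (xq k q m n p' * xq k q m n p)) ∨
    ((p'.1 < p.1 ∧ p'.2 < p.2) ∧ ∃ c : k,
        xq k q m n p * xq k q m n p'
          = c • (xq k q m n (p.1, p'.2) * xq k q m n (p'.1, p.2))) := by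
  obtain ⟨i, j⟩ := p
  obtain ⟨l, s⟩ := p'
  simp only at hbad ⊢
  rcases lt_trichotomy i l with hil | hil | hli
  · refine Or.inl ⟨Or.inl hil, ?_⟩
    rcases lt_trichotomy j s with hjs | hjs | hsj
    · -- i < l, j < s : coefficient q²
      refine ⟨q * q, ?_⟩
      have h1 := minor_rel k q m n hil hjs
      have h2 := mixed_rel k q m n hil hjs
      set u := xq k q m n (i, j) * xq k q m n (l, s) with hu
      set v := xq k q m n (l, s) * xq k q m n (i, j) with hv
      set w := xq k q m n (i, s) * xq k q m n (l, j) with hw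
      have hv' : v = q⁻¹ • w := by
        have : v = u - (q - q⁻¹) • w := by rw [← h2]; exact (sub_sub_cancel u v).symm
        rw [this, h1, ← sub_smul]
        congr 1
        ring
      rw [h1, hv', smul_smul]
      congr 1
      field_simp
    · subst hjs
      exact ⟨q, col_rel k q m n hil⟩
    · exact ⟨1, by rw [one_smul]; exact comm_rel k q m n hil hsj⟩
  · subst hil
    have hsj : s < j := by
      rcases not_and_or.1 hbad with h | h
      · exact absurd le_rfl h
      · exact lt_of_not_ge h
    refine Or.inl ⟨Or.inr ⟨rfl, hsj⟩, ⟨q⁻¹, ?_⟩⟩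
    rw [row_rel k q m n hsj, smul_smul, inv_mul_cancel₀ hq, one_smul]
  · have hsj : s < j := by
      rcases not_and_or.1 hbad with h | h
      · exact absurd hli.le h
      · exact lt_of_not_ge h
    refine Or.inr ⟨⟨hli, hsj⟩, ⟨q⁻¹, ?_⟩⟩
    have h1 := minor_rel k q m n hli hsj
    have h2 := mixed_rel k q m n hli hsj
    have h3 := comm_rel k q m n hli hsj
    -- h1 : xq(l,s)*xq(i,j) = q • (xq(l,j)*xq(i,s))
    -- h2 : xq(l,s)*xq(i,j) - xq(i,j)*xq(l,s) = (q-q⁻¹) • (xq(l,j)*xq(i,s))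
    -- h3 : xq(l,j)*xq(i,s) = xq(i,s)*xq(l,j)
    have : xq k q m n (i, j) * xq k q m n (l, s)
        = xq k q m n (l, s) * xq k q m n (i, j)
          - (q - q⁻¹) • (xq k q m n (l, j) * xq k q m n (i, s)) := by
      rw [← h2]; exact (sub_sub_cancel _ _).symm
    rw [this, h1, ← sub_smul, h3]
    congr 1
    ring

end QMAux
namespace QMAux

/-- inversion count with respect to a boolean relation. -/
def bcnt {α : Type*} (r : α → α → Bool) : List α → ℕ
  | [] => 0
  | a :: l => l.countP (r a) + bcnt r l

lemma bcnt_append {α : Type*} (r : α → α → Bool) (A B : List α) :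
    bcnt r (A ++ B) = bcnt r A + bcnt r B + (A.map fun a => B.countP (r a)).sum := by
  induction A with
  | nil => simp [bcnt]
  | cons a A ih =>
    simp only [List.cons_append, bcnt, List.append_eq, List.countP_append, List.map_cons,
      List.sum_cons, ih]
    ring

lemma bcnt_split {α : Type*} (r : α → α → Bool) (A B : List α) (x y : α) :
    bcnt r (A ++ x :: y :: B)
      = bcnt r A + bcnt r B + (if r x y then 1 else 0)
        + (B.countP (r x) + B.countP (r y))
        + (A.map fun a =>
            (if r a x then 1 else 0) + (if r a y then 1 else 0) + B.countP (r a)).sum := by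
  rw [bcnt_append]
  have h1 : bcnt r (x :: y :: B)
      = (if r x y then 1 else 0) + (B.countP (r x) + B.countP (r y)) + bcnt r B := by
    simp only [bcnt, List.countP_cons]
    ring
  have h2 : (A.map fun a => (x :: y :: B).countP (r a)).sum
      = (A.map fun a =>
          (if r a x then 1 else 0) + (if r a y then 1 else 0) + B.countP (r a)).sum := by
    apply congrArg
    apply List.map_congr_left
    intro a _
    simp only [List.countP_cons]
    ring
  rw [h1, h2]
  ring

lemma bcnt_compare {α : Type*} (r : α → α → Bool) (A B : List α) (x y x' y' : α)
    (hA : ∀ a, ((if r a x' then 1 else 0) + (if r a y' then 1 else 0) : ℕ)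
      = (if r a x then 1 else 0) + (if r a y then 1 else 0))
    (hB : B.countP (r x') + B.countP (r y') = B.countP (r x) + B.countP (r y)) :
    bcnt r (A ++ x' :: y' :: B) + (if r x y then 1 else 0)
      = bcnt r (A ++ x :: y :: B) + (if r x' y' then 1 else 0) := by
  rw [bcnt_split, bcnt_split]
  have h : (A.map fun a =>
        (if r a x' then 1 else 0) + (if r a y' then 1 else 0) + B.countP (r a)).sum
      = (A.map fun a =>
        (if r a x then 1 else 0) + (if r a y then 1 else 0) + B.countP (r a)).sum := by
    apply congrArg
    apply List.map_congr_left
    intro a _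
    rw [hA a]
  rw [h, hB]
  ring

variable {m n : ℕ}

def rR : (Fin m × Fin n) → (Fin m × Fin n) → Bool := fun a b => decide (a.1 < b.1)

def rC : (Fin m × Fin n) → (Fin m × Fin n) → Bool := fun a b => decide (b.2 < a.2)

def measR (L : List (Fin m × Fin n)) : ℕ := bcnt rR L

def measC (L : List (Fin m × Fin n)) : ℕ := bcnt rC L

def meas (L : List (Fin m × Fin n)) : ℕ :=
  (L.length * L.length + 1) * measR L + measC L

lemma length_ge_two (A B : List (Fin m × Fin n)) (x y : Fin m × Fin n) :
    2 ≤ (A ++ x :: y :: B).length := by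
  simp
  omega

lemma meas_swap_lt (A B : List (Fin m × Fin n)) (x y : Fin m × Fin n)
    (h : x.1 < y.1 ∨ (x.1 = y.1 ∧ y.2 < x.2)) :
    meas (A ++ y :: x :: B) < meas (A ++ x :: y :: B) := by
  have hlen : (A ++ y :: x :: B).length = (A ++ x :: y :: B).length := by simp
  have hR := bcnt_compare rR A B x y y x (fun a => by ring) (by ring)
  have hC := bcnt_compare rC A B x y y x (fun a => by ring) (by ring)
  have hW2 : 2 ≤ (A ++ x :: y :: B).length * (A ++ x :: y :: B).length + 1 := by
    have h2 := length_ge_two A B x y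
    nlinarith
  simp only [meas, measR, measC, hlen]
  set W := (A ++ x :: y :: B).length * (A ++ x :: y :: B).length + 1 with hW
  rcases h with h1 | ⟨h1, h2⟩
  · -- row inversion removed
    have hb1 : rR x y = true := by simp [rR, h1]
    have hb2 : rR y x = false := by simp only [rR, decide_eq_false_iff_not]; exact not_lt.2 h1.le
    rw [hb1, hb2] at hR
    norm_num at hR
    have hCle : bcnt rC (A ++ y :: x :: B) ≤ bcnt rC (A ++ x :: y :: B) + 1 := by
      split_ifs at hC <;> omega
    rw [← hR, Nat.mul_succ]
    omega
  · -- rows equal, column inversion removed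
    have hb1 : rR x y = false := by
      simp only [rR, decide_eq_false_iff_not]; exact fun hh => absurd h1 (ne_of_lt hh)
    have hb2 : rR y x = false := by
      simp only [rR, decide_eq_false_iff_not]; exact fun hh => absurd h1.symm (ne_of_lt hh)
    rw [hb1, hb2] at hR
    norm_num at hR
    have hc1 : rC x y = true := by simp [rC, h2]
    have hc2 : rC y x = false := by
      simp only [rC, decide_eq_false_iff_not]; exact not_lt.2 h2.le
    rw [hc1, hc2] at hC
    norm_num at hC
    rw [hR]
    omega

lemma meas_colswap_lt (A B : List (Fin m × Fin n)) (x y : Fin m × Fin n)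
    (h1 : y.1 < x.1) (h2 : y.2 < x.2) :
    meas (A ++ (x.1, y.2) :: (y.1, x.2) :: B) < meas (A ++ x :: y :: B) := by
  have hlen : (A ++ (x.1, y.2) :: (y.1, x.2) :: B).length = (A ++ x :: y :: B).length := by simp
  have hR := bcnt_compare rR A B x y (x.1, y.2) (y.1, x.2)
    (fun a => rfl) rfl
  have hC := bcnt_compare rC A B x y (x.1, y.2) (y.1, x.2)
    (fun a => Nat.add_comm _ _) (Nat.add_comm _ _)
  have hb1 : rR x y = false := by
    simp only [rR, decide_eq_false_iff_not]; exact not_lt.2 h1.le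
  have hb2 : rR (x.1, y.2) (y.1, x.2) = false := by
    simp only [rR, decide_eq_false_iff_not]; exact not_lt.2 h1.le
  rw [hb1, hb2] at hR
  norm_num at hR
  have hc1 : rC x y = true := by simp [rC, h2]
  have hc2 : rC (x.1, y.2) (y.1, x.2) = false := by
    simp only [rC, decide_eq_false_iff_not]; exact not_lt.2 h2.le
  rw [hc1, hc2] at hC
  norm_num at hC
  simp only [meas, measR, measC, hlen]
  rw [hR]
  omega

end QMAux
namespace QMAux

variable (k : Type) [Field k] (q : k) (m n : ℕ)

lemma coe_one' : ((1 : QMat k q m n) : (I₁ k q m n).ringCon.Quotient) = 1 := rfl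

lemma coe_matMono (L : List (Fin m × Fin n)) :
    ((matMono k q m n L : QMat k q m n) : (I₁ k q m n).ringCon.Quotient)
      = (L.map (xq k q m n)).prod := by
  induction L with
  | nil => simp [matMono, coe_one']
  | cons p L ih =>
    have h1 : matMono k q m n (p :: L) = X k q m n p.1 p.2 * matMono k q m n L := by
      simp [matMono]
    rw [h1, coe_mul', ih, List.map_cons, List.prod_cons]
    rfl

lemma exists_bad_split : ∀ (L : List (Fin m × Fin n)), ¬ OrderedIdx L →
    ∃ A x y B, L = A ++ x :: y :: B ∧ ¬(y.1 ≤ x.1 ∧ x.2 ≤ y.2) := by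
  intro L
  induction L with
  | nil => intro h; exact absurd List.isChain_nil h
  | cons p L ih =>
    intro h
    cases L with
    | nil => exact absurd (List.isChain_singleton p) h
    | cons p' L' =>
      by_cases hpq : p'.1 ≤ p.1 ∧ p.2 ≤ p'.2
      · have hno : ¬ OrderedIdx (p' :: L') := fun hC => h (List.isChain_cons_cons.2 ⟨hpq, hC⟩)
        obtain ⟨A, x, y, B, hEq, hbad⟩ := ih hno
        exact ⟨p :: A, x, y, B, by rw [hEq]; rfl, hbad⟩
      · exact ⟨[], p, p', L', rfl, hpq⟩

/-- The span of cosets of ordered monomials. -/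
def So (hq : q ≠ 0) : Submodule k (I₁ k q m n).ringCon.Quotient :=
  Submodule.span k
    (Set.range fun L : { L : List (Fin m × Fin n) // OrderedIdx L } =>
      ((matMono k q m n L.1 : QMat k q m n) : (I₁ k q m n).ringCon.Quotient))

lemma mem_span_matMono (hq : q ≠ 0) (L : List (Fin m × Fin n)) :
    ((matMono k q m n L : QMat k q m n) : (I₁ k q m n).ringCon.Quotient)
      ∈ So k q m n hq := by
  suffices H : ∀ (N : ℕ) (L : List (Fin m × Fin n)), meas L < N →
      ((matMono k q m n L : QMat k q m n) : (I₁ k q m n).ringCon.Quotient)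
        ∈ So k q m n hq from H (meas L + 1) L (Nat.lt_succ_self _)
  intro N
  induction N with
  | zero => intro L h; omega
  | succ N ih =>
    intro L hL
    by_cases hord : OrderedIdx L
    · exact Submodule.subset_span ⟨⟨L, hord⟩, rfl⟩
    · obtain ⟨A, x, y, B, rfl, hbad⟩ := exists_bad_split m n L hord
      have hprod : ∀ (u u' : Fin m × Fin n),
          ((matMono k q m n (A ++ u :: u' :: B) : QMat k q m n) :
            (I₁ k q m n).ringCon.Quotient)
          = (A.map (xq k q m n)).prod
            * ((xq k q m n u * xq k q m n u') * (B.map (xq k q m n)).prod) := by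
        intro u u'
        rw [coe_matMono, List.map_append, List.prod_append, List.map_cons, List.map_cons,
          List.prod_cons, List.prod_cons, mul_assoc]
      rcases swap_cases k q m n hq x y hbad with ⟨hcond, c, hc⟩ | ⟨⟨h1, h2⟩, c, hc⟩
      · have hmeas := meas_swap_lt A B x y hcond
        have hrec := ih (A ++ y :: x :: B) (by omega)
        rw [hprod x y, hc, smul_mul_assoc, mul_smul_comm, ← hprod y x]
        exact Submodule.smul_mem _ c hrec
      · have hmeas := meas_colswap_lt A B x y h1 h2
        have hrec := ih (A ++ (x.1, y.2) :: (y.1, x.2) :: B) (by omega)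
        rw [hprod x y, hc, smul_mul_assoc, mul_smul_comm, ← hprod (x.1, y.2) (y.1, x.2)]
        exact Submodule.smul_mem _ c hrec

/-- The span of cosets of all monomials. -/
def S0 : Submodule k (I₁ k q m n).ringCon.Quotient :=
  Submodule.span k
    {z | ∃ L : List (Fin m × Fin n),
      z = ((matMono k q m n L : QMat k q m n) : (I₁ k q m n).ringCon.Quotient)}

lemma S0_mul {x y : (I₁ k q m n).ringCon.Quotient}
    (hx : x ∈ S0 k q m n) (hy : y ∈ S0 k q m n) : x * y ∈ S0 k q m n := by
  have key : ∀ (L : List (Fin m × Fin n)) {y}, y ∈ S0 k q m n →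
      ((matMono k q m n L : QMat k q m n) : (I₁ k q m n).ringCon.Quotient) * y
        ∈ S0 k q m n := by
    intro L y hy
    induction hy using Submodule.span_induction with
    | mem z hz =>
      obtain ⟨L', rfl⟩ := hz
      apply Submodule.subset_span
      refine ⟨L ++ L', ?_⟩
      rw [coe_matMono, coe_matMono, coe_matMono, List.map_append, List.prod_append]
    | zero => rw [mul_zero]; exact Submodule.zero_mem _
    | add a b _ _ pa pb => rw [mul_add]; exact Submodule.add_mem _ pa pb
    | smul c a _ pa => rw [mul_smul_comm]; exact Submodule.smul_mem _ c pa
  induction hx using Submodule.span_induction with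
  | mem z hz => obtain ⟨L, rfl⟩ := hz; exact key L hy
  | zero => rw [zero_mul]; exact Submodule.zero_mem _
  | add a b _ _ pa pb => rw [add_mul]; exact Submodule.add_mem _ pa pb
  | smul c a _ pa => rw [smul_mul_assoc]; exact Submodule.smul_mem _ c pa

lemma span_part (hq : q ≠ 0) :
    Submodule.span k
      (Set.range fun L : { L : List (Fin m × Fin n) // OrderedIdx L } =>
        ((matMono k q m n L.1 : QMat k q m n) : (I₁ k q m n).ringCon.Quotient)) = ⊤ := by
  rw [eq_top_iff]
  have hS0le : S0 k q m n ≤ So k q m n hq := by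
    rw [S0, Submodule.span_le]
    rintro z ⟨L, rfl⟩
    exact mem_span_matMono k q m n hq L
  rintro z -
  obtain ⟨a⟩ := z
  obtain ⟨b, rfl⟩ := RingQuot.mkAlgHom_surjective k (MatRel k q m n) a
  show ((RingQuot.mkAlgHom k (MatRel k q m n) b : QMat k q m n) :
    (I₁ k q m n).ringCon.Quotient) ∈ So k q m n hq
  refine hS0le ?_
  induction b using FreeAlgebra.induction with
  | grade0 r =>
    rw [AlgHom.commutes]
    have h1 : ((algebraMap k (QMat k q m n) r : QMat k q m n) :
        (I₁ k q m n).ringCon.Quotient) = r • 1 := by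
      rw [Algebra.algebraMap_eq_smul_one, RingCon.coe_smul, coe_one']
    rw [h1]
    refine Submodule.smul_mem _ r (Submodule.subset_span ⟨[], ?_⟩)
    rw [coe_matMono]
    simp
  | grade1 p =>
    apply Submodule.subset_span
    refine ⟨[p], ?_⟩
    rw [coe_matMono]
    show RingQuot.mkAlgHom k (MatRel k q m n) (FreeAlgebra.ι k p)
        = ((List.map (xq k q m n) [p]).prod : (I₁ k q m n).ringCon.Quotient)
    simp [xq, X]
  | mul a b pa pb =>
    rw [map_mul, coe_mul']
    exact S0_mul k q m n pa pb
  | add a b pa pb =>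
    rw [map_add, RingCon.coe_add]
    exact Submodule.add_mem _ pa pb

end QMAux

/-- The cosets modulo `I₁` of the ordered monomials form a `k`-vector-space
basis of `O_q(M_{m,n}(k))/I₁`: they are linearly independent and they span. -/
theorem orderedMono_basis (k : Type) [Field k] (q : k) (hq : q ≠ 0) (m n : ℕ) :
    LinearIndependent k
        (fun L : { L : List (Fin m × Fin n) // OrderedIdx L } =>
          ((matMono k q m n L.1 : QMat k q m n) : (I₁ k q m n).ringCon.Quotient)) ∧
      Submodule.span k
          (Set.range fun L : { L : List (Fin m × Fin n) // OrderedIdx L } =>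
            ((matMono k q m n L.1 : QMat k q m n) : (I₁ k q m n).ringCon.Quotient)) = ⊤ := by
  exact ⟨QMAux.li_part k q m n hq, QMAux.span_part k q m n hq⟩
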